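/- The augmented risk satisfies R_T(θ) ≥ (1 − C_T(θ))/2, where R_T is the average of the original-input error probability and the dual-input error probability, and C_T is the probability of duality consistency. -/

import Mathlib

open MeasureTheory

theorem stmt_2 {Ω A : Type*} [MeasurableSpace Ω] (μ : Measure Ω) [IsProbabilityMeasure μ]
    [Fintype A] [DecidableEq A]
    (f astar : Ω → A) (T : Ω → Ω) (φ : A → A)
    (hφ : Function.Bijective φ)
    (hdual : ∀ x, astar (T x) = φ (astar x))
    (hR : MeasurableSet {x | f x ≠ astar x})
    (hRT : MeasurableSet {x | f (T x) ≠ φ (astar x)})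
    (hC : MeasurableSet {x | f (T x) = φ (f x)}) :
    ((μ {x | f x ≠ astar x}).toReal + (μ {x | f (T x) ≠ φ (astar x)}).toReal) / 2 ≥
      (1 - (μ {x | f (T x) = φ (f x)}).toReal) / 2 := by
  have hsub : {x | f (T x) = φ (f x)}ᶜ ⊆
      {x | f x ≠ astar x} ∪ {x | f (T x) ≠ φ (astar x)} := by
    intro x hx
    by_contra h
    simp only [Set.mem_union, Set.mem_setOf_eq, not_or, not_not] at h
    exact hx (by simp only [Set.mem_setOf_eq, h.1, h.2])
  have h1 : μ {x | f (T x) = φ (f x)}ᶜ ≤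
      μ {x | f x ≠ astar x} + μ {x | f (T x) ≠ φ (astar x)} :=
    le_trans (measure_mono hsub) (measure_union_le _ _)
  have hcompl : μ {x | f (T x) = φ (f x)}ᶜ = 1 - μ {x | f (T x) = φ (f x)} :=
    prob_compl_eq_one_sub hC
  rw [hcompl] at h1
  have hfin : ∀ s : Set Ω, μ s ≠ ⊤ := fun s => measure_ne_top μ s
  have h2 : (1 - μ {x | f (T x) = φ (f x)}).toReal ≤
      (μ {x | f x ≠ astar x}).toReal + (μ {x | f (T x) ≠ φ (astar x)}).toReal := by
    rw [← ENNReal.toReal_add (hfin _) (hfin _)]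
    exact ENNReal.toReal_mono (by simp [ENNReal.add_ne_top, hfin]) h1
  have h3 : 1 - (μ {x | f (T x) = φ (f x)}).toReal ≤
      (1 - μ {x | f (T x) = φ (f x)}).toReal := by
    rw [ENNReal.toReal_sub_of_le prob_le_one (by simp)]
    simp
  linarith
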